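/- For m ≥ α ≥ 0, the quantity λ_m := 2^α Σ_{k=1}^m ( (m+k)!/(k!(m−k)!) · k / ((α+1)(α+2)⋯(α+k−1)) ) satisfies λ_m ≥ 2^α (2^m − 1). In particular λ_m > 0 for all m ≥ 1 and λ_m → ∞ as m → ∞. -/
import Mathlib


open Finset Filter


lemma prod_shift (m n : ℕ) :
    (∏ j ∈ range n, ((m:ℝ) + (j + 1))) * (Nat.factorial m : ℝ) = (Nat.factorial (m + n) : ℝ) := by
  induction n with
  | zero => simp
  | succ n ih =>
      rw [prod_range_succ, mul_right_comm, ih, show m + (n+1) = (m+n)+1 from rfl,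
        Nat.factorial_succ]
      push_cast; ring

lemma term_ge (α : ℝ) (hα : 0 ≤ α) (m k : ℕ) (hk : 1 ≤ k) (hkm : k ≤ m) (hαm : α ≤ m) :
    (Nat.choose m k : ℝ) ≤
      (Nat.factorial (m + k) : ℝ) /
          ((Nat.factorial k : ℝ) * (Nat.factorial (m - k) : ℝ)) * (k : ℝ) /
        ∏ j ∈ range (k - 1), (α + (j + 1)) := by
  have hPpos : (0:ℝ) < ∏ j ∈ range (k - 1), (α + (j + 1)) :=
    Finset.prod_pos (fun j _ => by positivity)
  have hB : (0:ℝ) < (Nat.factorial k : ℝ) * (Nat.factorial (m - k) : ℝ) := by positivity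
  rw [Nat.cast_choose ℝ hkm]
  have hPle : (∏ j ∈ range (k - 1), (α + (j + 1))) ≤ ∏ j ∈ range (k - 1), ((m:ℝ) + (j + 1)) :=
    Finset.prod_le_prod (fun j _ => by positivity) (fun j _ => by linarith)
  have key : (Nat.factorial m : ℝ) * ∏ j ∈ range (k - 1), (α + (j + 1)) ≤
      (Nat.factorial (m + k) : ℝ) * k := by
    have h1 : (Nat.factorial m : ℝ) * ∏ j ∈ range (k - 1), (α + (j + 1)) ≤
        (Nat.factorial (m + (k-1)) : ℝ) := by
      rw [← prod_shift m (k-1)]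
      have : (0:ℝ) ≤ (Nat.factorial m : ℝ) := by positivity
      nlinarith [hPpos, hPle]
    have h2 : (Nat.factorial (m + (k-1)) : ℝ) ≤ (Nat.factorial (m + k) : ℝ) := by
      exact_mod_cast Nat.factorial_le (by omega)
    have h3 : (Nat.factorial (m + k) : ℝ) ≤ (Nat.factorial (m + k) : ℝ) * k := by
      have hk1 : (1:ℝ) ≤ k := by exact_mod_cast hk
      have hf : (0:ℝ) < (Nat.factorial (m + k) : ℝ) := by positivity
      nlinarith
    linarith
  have hrw : (Nat.factorial (m + k) : ℝ) /
          ((Nat.factorial k : ℝ) * (Nat.factorial (m - k) : ℝ)) * (k : ℝ) /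
        ∏ j ∈ range (k - 1), (α + (j + 1)) =
      ((Nat.factorial (m + k) : ℝ) * k) /
        (((Nat.factorial k : ℝ) * (Nat.factorial (m - k) : ℝ)) *
          ∏ j ∈ range (k - 1), (α + (j + 1))) := by ring
  rw [hrw, div_le_div_iff₀ hB (by positivity)]
  nlinarith [key, hB]

lemma sum_choose_Icc (m : ℕ) :
    ∑ k ∈ Icc 1 m, (Nat.choose m k : ℝ) = 2 ^ m - 1 := by
  have h0 : (0:ℕ) ∉ Icc 1 m := by simp
  have hins : insert 0 (Icc 1 m) = range (m + 1) := by
    ext x; simp [Nat.lt_succ_iff]; omega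
  have := Nat.sum_range_choose m
  have hsum : ∑ k ∈ range (m+1), (Nat.choose m k : ℝ) = 2 ^ m := by
    exact_mod_cast congrArg (Nat.cast (R := ℝ)) this
  rw [← hins, Finset.sum_insert h0] at hsum
  simp at hsum ⊢
  linarith

/-- For `m ≥ α ≥ 0`, the eigenvalue
`λ_m = 2^α ∑_{k=1}^m (m+k)!/(k!(m-k)!) · k/((α+1)⋯(α+k-1))`
satisfies `λ_m ≥ 2^α (2^m - 1)`; in particular `λ_m > 0` for `m ≥ 1` and `λ_m → ∞`. -/
theorem stmt_4 (α : ℝ) (hα : 0 ≤ α) :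
    (∀ m : ℕ, (α : ℝ) ≤ m →
        (2 : ℝ) ^ α * ((2 : ℝ) ^ m - 1) ≤
          (2 : ℝ) ^ α * ∑ k ∈ Icc 1 m,
            (Nat.factorial (m + k) : ℝ) /
                ((Nat.factorial k : ℝ) * (Nat.factorial (m - k) : ℝ)) * (k : ℝ) /
              ∏ j ∈ range (k - 1), (α + (j + 1))) ∧
    (∀ m : ℕ, 1 ≤ m → (α : ℝ) ≤ m →
        0 < (2 : ℝ) ^ α * ∑ k ∈ Icc 1 m,
            (Nat.factorial (m + k) : ℝ) /
                ((Nat.factorial k : ℝ) * (Nat.factorial (m - k) : ℝ)) * (k : ℝ) /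
              ∏ j ∈ range (k - 1), (α + (j + 1))) ∧
    Tendsto (fun m : ℕ =>
        (2 : ℝ) ^ α * ∑ k ∈ Icc 1 m,
          (Nat.factorial (m + k) : ℝ) /
              ((Nat.factorial k : ℝ) * (Nat.factorial (m - k) : ℝ)) * (k : ℝ) /
            ∏ j ∈ range (k - 1), (α + (j + 1)))
      atTop atTop := by
  have main : ∀ m : ℕ, (α : ℝ) ≤ m →
      (2 : ℝ) ^ α * ((2 : ℝ) ^ m - 1) ≤
        (2 : ℝ) ^ α * ∑ k ∈ Icc 1 m,
          (Nat.factorial (m + k) : ℝ) /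
              ((Nat.factorial k : ℝ) * (Nat.factorial (m - k) : ℝ)) * (k : ℝ) /
            ∏ j ∈ range (k - 1), (α + (j + 1)) := by
    intro m hm
    have hsum : (2 : ℝ) ^ m - 1 ≤ ∑ k ∈ Icc 1 m,
        (Nat.factorial (m + k) : ℝ) /
            ((Nat.factorial k : ℝ) * (Nat.factorial (m - k) : ℝ)) * (k : ℝ) /
          ∏ j ∈ range (k - 1), (α + (j + 1)) := by
      rw [← sum_choose_Icc m]
      refine Finset.sum_le_sum fun k hk => ?_
      obtain ⟨h1, h2⟩ := Finset.mem_Icc.mp hk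
      exact term_ge α hα m k h1 h2 hm
    exact mul_le_mul_of_nonneg_left hsum (by positivity)
  refine ⟨main, fun m hm1 hm => ?_, ?_⟩
  · refine lt_of_lt_of_le ?_ (main m hm)
    have h2 : (2:ℝ) ≤ 2 ^ m := by
      calc (2:ℝ) = 2 ^ 1 := by norm_num
      _ ≤ 2 ^ m := pow_le_pow_right₀ (by norm_num) hm1
    have : (0:ℝ) < 2 ^ α := by positivity
    nlinarith
  · have hg : Tendsto (fun m : ℕ => (2 : ℝ) ^ α * ((2 : ℝ) ^ m - 1)) atTop atTop := by
      have h1 : Tendsto (fun m : ℕ => (2 : ℝ) ^ m) atTop atTop :=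
        tendsto_pow_atTop_atTop_of_one_lt (by norm_num)
      have h2 := tendsto_atTop_add_const_right atTop (-1 : ℝ) h1
      simp only [← sub_eq_add_neg] at h2
      exact Tendsto.const_mul_atTop (by positivity) h2
    refine tendsto_atTop_mono' atTop ?_ hg
    filter_upwards [eventually_ge_atTop ⌈α⌉₊] with m hm
    exact main m (le_trans (Nat.le_ceil α) (by exact_mod_cast hm))
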